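/- For any set of 2n points in the Euclidean plane, there exist a perfect matching M and a point z in the plane such that for every pair {x, y} ∈ M, either z ∈ {x, y} or the angle ∠xzy is at least 2π/3. -/

import Mathlib

set_option maxHeartbeats 1600000

set_option linter.unusedSectionVars false
open Real Finset

section helpers
variable {ι : Type*}

lemma FM.cont_inf' {s : Finset ι} (hs : s.Nonempty) {f : ι → ℝ → ℝ}
    (hf : ∀ i ∈ s, Continuous (f i)) :
    Continuous fun t => s.inf' hs fun i => f i t := by
  induction hs using Finset.Nonempty.cons_induction with
  | singleton a => simpa using hf a (by simp)
  | cons a s ha hs ih =>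
      simp only [Finset.inf'_cons hs]
      exact (hf a (by simp)).min (ih (fun i hi => hf i (by simp [hi])))

lemma FM.cont_sup' {s : Finset ι} (hs : s.Nonempty) {f : ι → ℝ → ℝ}
    (hf : ∀ i ∈ s, Continuous (f i)) :
    Continuous fun t => s.sup' hs fun i => f i t := by
  induction hs using Finset.Nonempty.cons_induction with
  | singleton a => simpa using hf a (by simp)
  | cons a s ha hs ih =>
      simp only [Finset.sup'_cons hs]
      exact (hf a (by simp)).max (ih (fun i hi => hf i (by simp [hi])))

lemma FM.sup'_neg {s : Finset ι} (hs : s.Nonempty) (f : ι → ℝ) :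
    (s.sup' hs fun i => -f i) = - s.inf' hs f := by
  induction hs using Finset.Nonempty.cons_induction with
  | singleton a => simp
  | cons a s ha hs ih => simp [Finset.sup'_cons hs, Finset.inf'_cons hs, ih, max_neg_neg]

lemma FM.inf'_neg {s : Finset ι} (hs : s.Nonempty) (f : ι → ℝ) :
    (s.inf' hs fun i => -f i) = - s.sup' hs f := by
  induction hs using Finset.Nonempty.cons_induction with
  | singleton a => simp
  | cons a s ha hs ih => simp [Finset.sup'_cons hs, Finset.inf'_cons hs, ih, min_neg_neg]

end helpers
open Real Finset

namespace FM
section median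
variable {N : Type*} [Fintype N] [DecidableEq N]

/-- sup of `f` over `S`, with junk value for empty `S`. -/
noncomputable def FS (S : Finset N) (f : N → ℝ) : ℝ :=
  if h : S.Nonempty then S.sup' h f else 0

noncomputable def GS (S : Finset N) (f : N → ℝ) : ℝ :=
  if h : S.Nonempty then S.inf' h f else 0

variable (n : ℕ)

noncomputable def Afam : Finset (Finset N) := Finset.powersetCard (n+1) Finset.univ

variable {n}

lemma Afam_nonempty (hn : n + 1 ≤ Fintype.card N) : (Afam (N := N) n).Nonempty := by
  rw [Afam, Finset.powersetCard_nonempty]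
  simpa using hn

lemma mem_Afam_nonempty {S : Finset N} (hS : S ∈ Afam (N := N) n) : S.Nonempty := by
  rw [Afam, Finset.mem_powersetCard] at hS
  rw [← Finset.card_pos, hS.2]; omega

noncomputable def aF (hn : n + 1 ≤ Fintype.card N) (f : N → ℝ) : ℝ :=
  (Afam (N := N) n).inf' (Afam_nonempty hn) (fun S => FS S f)

noncomputable def bF (hn : n + 1 ≤ Fintype.card N) (f : N → ℝ) : ℝ :=
  (Afam (N := N) n).sup' (Afam_nonempty hn) (fun S => GS S f)

noncomputable def mF (hn : n + 1 ≤ Fintype.card N) (f : N → ℝ) : ℝ :=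
  (aF hn f + bF hn f) / 2

variable (hn : n + 1 ≤ Fintype.card N) (hN : Fintype.card N ≤ 2*n + 1)

include hN in
lemma bF_le_aF (f : N → ℝ) : bF hn f ≤ aF hn f := by
  apply Finset.sup'_le
  intro S' hS'
  apply Finset.le_inf'
  intro S hS
  have h1 := mem_Afam_nonempty hS
  have h2 := mem_Afam_nonempty hS'
  -- S ∩ S' nonempty
  have hcard : (S ∩ S').Nonempty := by
    rw [← Finset.card_pos]
    have h3 := Finset.card_union_add_card_inter S S'
    have h4 : (S ∪ S').card ≤ Fintype.card N := by
      simpa using Finset.card_le_card (Finset.subset_univ (S ∪ S'))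
    rw [Afam, Finset.mem_powersetCard] at hS hS'
    omega
  obtain ⟨x, hx⟩ := hcard
  rw [Finset.mem_inter] at hx
  calc GS S' f = S'.inf' h2 f := by rw [GS, dif_pos h2]
    _ ≤ f x := Finset.inf'_le _ hx.2
    _ ≤ S.sup' h1 f := Finset.le_sup' _ hx.1
    _ = FS S f := by rw [FS, dif_pos h1]

lemma count_lt_aF (f : N → ℝ) (S : Finset N) (h : ∀ i ∈ S, f i < aF hn f) : S.card ≤ n := by
  by_contra hc
  push_neg at hc
  obtain ⟨S', hS'sub, hS'card⟩ := Finset.exists_subset_card_eq hc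
  have hS'A : S' ∈ Afam (N := N) n := by
    rw [Afam, Finset.mem_powersetCard]
    exact ⟨Finset.subset_univ _, hS'card⟩
  have hne := mem_Afam_nonempty hS'A
  have h1 : aF hn f ≤ FS S' f := Finset.inf'_le (fun S => FS S f) hS'A
  rw [FS, dif_pos hne] at h1
  have h2 : S'.sup' hne f < aF hn f := by
    rw [Finset.sup'_lt_iff]
    exact fun i hi => h i (hS'sub hi)
  linarith

lemma count_gt_bF (f : N → ℝ) (S : Finset N) (h : ∀ i ∈ S, bF hn f < f i) : S.card ≤ n := by
  by_contra hc
  push_neg at hc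
  obtain ⟨S', hS'sub, hS'card⟩ := Finset.exists_subset_card_eq hc
  have hS'A : S' ∈ Afam (N := N) n := by
    rw [Afam, Finset.mem_powersetCard]
    exact ⟨Finset.subset_univ _, hS'card⟩
  have hne := mem_Afam_nonempty hS'A
  have h1 : GS S' f ≤ bF hn f := Finset.le_sup' (fun S => GS S f) hS'A
  rw [GS, dif_pos hne] at h1
  have h2 : bF hn f < S'.inf' hne f := by
    rw [Finset.lt_inf'_iff]
    exact fun i hi => h i (hS'sub hi)
  linarith

include hN in
lemma count_lt_mF (f : N → ℝ) (S : Finset N) (h : ∀ i ∈ S, f i < mF hn f) : S.card ≤ n := by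
  apply count_lt_aF hn f S
  intro i hi
  have := bF_le_aF hn hN f
  have := h i hi
  rw [mF] at this
  linarith

include hN in
lemma count_gt_mF (f : N → ℝ) (S : Finset N) (h : ∀ i ∈ S, mF hn f < f i) : S.card ≤ n := by
  apply count_gt_bF hn f S
  intro i hi
  have := bF_le_aF hn hN f
  have := h i hi
  rw [mF] at this
  linarith

lemma mF_neg (f : N → ℝ) : mF hn (fun i => - f i) = - mF hn f := by
  have ha : aF hn (fun i => - f i) = - bF hn f := by
    rw [aF, bF, ← FM.inf'_neg]
    apply Finset.inf'_congr _ rfl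
    intro S hS
    have h1 := mem_Afam_nonempty hS
    rw [FS, GS, dif_pos h1, dif_pos h1, ← FM.sup'_neg]
  have hb : bF hn (fun i => - f i) = - aF hn f := by
    rw [bF, aF, ← FM.sup'_neg]
    apply Finset.sup'_congr _ rfl
    intro S hS
    have h1 := mem_Afam_nonempty hS
    rw [FS, GS, dif_pos h1, dif_pos h1, ← FM.inf'_neg]
  rw [mF, ha, hb, mF]
  ring

lemma mF_congr (f g : N → ℝ) (h : ∀ i, f i = g i) : mF hn f = mF hn g := by
  have : f = g := funext h
  rw [this]

lemma mF_cont (v : N → ℝ → ℝ) (hv : ∀ i, Continuous (v i)) :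
    Continuous (fun t => mF hn (fun i => v i t)) := by
  have ha : Continuous (fun t => aF hn (fun i => v i t)) := by
    apply FM.cont_inf' (Afam_nonempty hn) (f := fun S t => FS S (fun i => v i t))
    intro S hS
    have h1 := mem_Afam_nonempty hS
    have : (fun t => FS S (fun i => v i t)) = (fun t => S.sup' h1 (fun i => v i t)) := by
      funext t; rw [FS, dif_pos h1]
    rw [this]
    exact FM.cont_sup' h1 (fun i _ => hv i)
  have hb : Continuous (fun t => bF hn (fun i => v i t)) := by
    apply FM.cont_sup' (Afam_nonempty hn) (f := fun S t => GS S (fun i => v i t))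
    intro S hS
    have h1 := mem_Afam_nonempty hS
    have : (fun t => GS S (fun i => v i t)) = (fun t => S.inf' h1 (fun i => v i t)) := by
      funext t; rw [GS, dif_pos h1]
    rw [this]
    exact FM.cont_inf' h1 (fun i _ => hv i)
  unfold mF
  fun_prop

end median
end FM
section
open Real Finset

lemma FM.exists_median (n : ℕ) (hn1 : 1 ≤ n) (X Y : Fin (2*n) → ℝ) :
    ∃ m : ℝ → ℝ, Continuous m ∧ (∀ t, m (t+π) = -m t) ∧
      (∀ (t : ℝ) (S : Finset (Fin (2*n))),
        (∀ i ∈ S, m t < X i * Real.cos t + Y i * Real.sin t) → S.card ≤ n) := by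
  have hn : n + 1 ≤ Fintype.card (Fin (2*n)) := by simp; omega
  have hN : Fintype.card (Fin (2*n)) ≤ 2*n + 1 := by simp
  refine ⟨fun t => FM.mF hn (fun i => X i * Real.cos t + Y i * Real.sin t),
    FM.mF_cont hn _ (fun i => by fun_prop), ?_, ?_⟩
  · intro t
    have h : (fun i => X i * Real.cos (t+π) + Y i * Real.sin (t+π))
        = (fun i => -(X i * Real.cos t + Y i * Real.sin t)) := by
      funext i; rw [Real.cos_add_pi, Real.sin_add_pi]; ring
    show FM.mF hn (fun i => X i * Real.cos (t+π) + Y i * Real.sin (t+π)) = _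
    rw [h]
    exact FM.mF_neg hn _
  · intro t S hS
    exact FM.count_gt_mF hn hN _ S hS

theorem FM.exists_center (n : ℕ) (hn1 : 1 ≤ n) (X Y : Fin (2*n) → ℝ) :
    ∃ (z1 z2 t0 : ℝ), ∀ (k : ℤ) (S : Finset (Fin (2*n))),
      (∀ i ∈ S, 0 < (X i - z1) * Real.cos (t0 + k*(π/3)) + (Y i - z2) * Real.sin (t0 + k*(π/3)))
      → S.card ≤ n := by
  obtain ⟨m, mcont, mflip, mhalf⟩ := FM.exists_median n hn1 X Y
  have addc : ∀ c:ℝ, Continuous fun t:ℝ => t + c := fun c => continuous_id.add continuous_const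
  have mc : ∀ c:ℝ, Continuous fun t => m (t+c) := fun c => mcont.comp (addc c)
  have cosc : ∀ c:ℝ, Continuous fun t => Real.cos (t+c) :=
    fun c => Real.continuous_cos.comp (addc c)
  have sinc : ∀ c:ℝ, Continuous fun t => Real.sin (t+c) :=
    fun c => Real.continuous_sin.comp (addc c)
  set Z1 : ℝ → ℝ := fun t => ((4 * m t - 2 * m (t + π/3)) / 3) * Real.cos t
      + ((4 * m (t + π/3) - 2 * m t) / 3) * Real.cos (t+π/3) with hZ1
  set Z2 : ℝ → ℝ := fun t => ((4 * m t - 2 * m (t + π/3)) / 3) * Real.sin t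
      + ((4 * m (t + π/3) - 2 * m t) / 3) * Real.sin (t+π/3) with hZ2
  have hZ1cont : Continuous Z1 := by
    rw [hZ1]
    exact (((((continuous_const.mul mcont).sub (continuous_const.mul (mc (π/3)))).div_const 3).mul
      Real.continuous_cos).add
      ((((continuous_const.mul (mc (π/3))).sub (continuous_const.mul mcont)).div_const 3).mul
        (cosc (π/3))))
  have hZ2cont : Continuous Z2 := by
    rw [hZ2]
    exact (((((continuous_const.mul mcont).sub (continuous_const.mul (mc (π/3)))).div_const 3).mul
      Real.continuous_sin).add
      ((((continuous_const.mul (mc (π/3))).sub (continuous_const.mul mcont)).div_const 3).mul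
        (sinc (π/3))))
  have e2 : ∀ t, Real.cos (t+π/3) * Real.cos t + Real.sin (t+π/3) * Real.sin t = 1/2 := by
    intro t
    have h := Real.cos_sub (t+π/3) t
    rw [show t + π/3 - t = π/3 by ring, Real.cos_pi_div_three] at h
    linarith
  have H0 : ∀ t, Z1 t * Real.cos t + Z2 t * Real.sin t = m t := by
    intro t
    have e1 := Real.sin_sq_add_cos_sq t
    have e2t := e2 t
    simp only [hZ1, hZ2]
    linear_combination ((4 * m t - 2 * m (t + π/3))/3) * e1
      + ((4 * m (t + π/3) - 2 * m t)/3) * e2t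
  have H1 : ∀ t, Z1 t * Real.cos (t+π/3) + Z2 t * Real.sin (t+π/3) = m (t+π/3) := by
    intro t
    have e1 := Real.sin_sq_add_cos_sq (t+π/3)
    have e2t := e2 t
    simp only [hZ1, hZ2]
    linear_combination ((4 * m (t+π/3) - 2 * m t)/3) * e1
      + ((4 * m t - 2 * m (t + π/3))/3) * e2t
  have Z1flip : ∀ t, Z1 (t + π) = Z1 t := by
    intro t
    simp only [hZ1]
    rw [show t + π + π/3 = (t + π/3) + π from by ring, Real.cos_add_pi, Real.cos_add_pi,
      mflip, mflip]
    ring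
  have Z2flip : ∀ t, Z2 (t + π) = Z2 t := by
    intro t
    simp only [hZ2]
    rw [show t + π + π/3 = (t + π/3) + π from by ring, Real.sin_add_pi, Real.sin_add_pi,
      mflip, mflip]
    ring
  set g : ℝ → ℝ := fun t =>
    Z1 t * Real.cos (t + 2*π/3) + Z2 t * Real.sin (t + 2*π/3) - m (t + 2*π/3) with hg
  have gcont : Continuous g := by
    rw [hg]
    exact ((hZ1cont.mul (cosc (2*π/3))).add (hZ2cont.mul (sinc (2*π/3)))).sub (mc (2*π/3))
  have gflip : ∀ t, g (t + π) = - g t := by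
    intro t
    simp only [hg]
    rw [show t + π + 2*π/3 = (t + 2*π/3) + π from by ring, Real.cos_add_pi, Real.sin_add_pi,
      mflip, Z1flip, Z2flip]
    ring
  obtain ⟨t0, _, ht0⟩ : ∃ t ∈ Set.Icc (0:ℝ) π, g t = 0 := by
    have hπ : (0:ℝ) ≤ π := Real.pi_pos.le
    rcases le_total (g 0) 0 with h0 | h0
    · have hmem : (0:ℝ) ∈ Set.Icc (g 0) (g π) := by
        refine ⟨h0, ?_⟩
        have h := gflip 0
        rw [zero_add] at h
        rw [h]; linarith
      obtain ⟨t0, ht0mem, ht0⟩ := intermediate_value_Icc hπ gcont.continuousOn hmem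
      exact ⟨t0, ht0mem, ht0⟩
    · have hmem : (0:ℝ) ∈ Set.Icc (g π) (g 0) := by
        refine ⟨?_, h0⟩
        have h := gflip 0
        rw [zero_add] at h
        rw [h]; linarith
      obtain ⟨t0, ht0mem, ht0⟩ := intermediate_value_Icc' hπ gcont.continuousOn hmem
      exact ⟨t0, ht0mem, ht0⟩
  refine ⟨Z1 t0, Z2 t0, t0, ?_⟩
  have hflip : ∀ c, (Z1 t0 * Real.cos c + Z2 t0 * Real.sin c = m c) ↔
      (Z1 t0 * Real.cos (c + π) + Z2 t0 * Real.sin (c + π) = m (c + π)) := by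
    intro c
    rw [Real.cos_add_pi, Real.sin_add_pi, mflip]
    constructor <;> intro h <;> linarith
  have hshift : ∀ (j : ℤ) (c : ℝ), (Z1 t0 * Real.cos c + Z2 t0 * Real.sin c = m c) →
      Z1 t0 * Real.cos (c + j * π) + Z2 t0 * Real.sin (c + j * π) = m (c + j * π) := by
    intro j
    induction j using Int.induction_on with
    | zero => intro c h; simpa using h
    | succ k ih =>
        intro c h
        have h2 := (hflip (c + (k:ℤ) * π)).mp (ih c h)
        have heq : c + ((k:ℤ) + 1 : ℤ) * π = c + (k:ℤ) * π + π := by push_cast; ring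
        rw [heq]
        exact h2
    | pred k ih =>
        intro c h
        have base := ih c h
        have heq : c + (-(k:ℤ) : ℤ) * π = (c + (-(k:ℤ) - 1 : ℤ) * π) + π := by push_cast; ring
        rw [heq] at base
        exact (hflip _).mpr base
  have hP : ∀ k : ℤ, Z1 t0 * Real.cos (t0 + k*(π/3)) + Z2 t0 * Real.sin (t0 + k*(π/3))
      = m (t0 + k*(π/3)) := by
    intro k
    have hk3 : k = 3*(k/3) + k%3 := by omega
    have hr : k % 3 = 0 ∨ k % 3 = 1 ∨ k % 3 = 2 := by omega
    have base : Z1 t0 * Real.cos (t0 + (k % 3 : ℤ)*(π/3)) + Z2 t0 * Real.sin (t0 + (k % 3 : ℤ)*(π/3))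
        = m (t0 + (k % 3 : ℤ)*(π/3)) := by
      rcases hr with h | h | h <;> rw [h]
      · push_cast
        rw [show t0 + 0*(π/3) = t0 from by ring]
        exact H0 t0
      · push_cast
        rw [show t0 + 1*(π/3) = t0 + π/3 from by ring]
        exact H1 t0
      · push_cast
        rw [show t0 + 2*(π/3) = t0 + 2*π/3 from by ring]
        simp only [hg] at ht0
        linarith
    have final := hshift (k/3) _ base
    have hcast : (k:ℝ) = 3*((k/3 : ℤ):ℝ) + ((k%3 : ℤ):ℝ) := by exact_mod_cast hk3
    rw [show t0 + (k:ℝ)*(π/3) = t0 + ((k%3 : ℤ):ℝ)*(π/3) + ((k/3 : ℤ):ℝ)*π from by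
      rw [hcast]; ring]
    exact final
  intro k S hS
  apply mhalf (t0 + k*(π/3)) S
  intro i hi
  have h1 := hS i hi
  have h2 := hP k
  nlinarith [h1, h2]
end
section
open Real Finset

lemma FM.matching (n : ℕ) (hn : 1 ≤ n) (φ : Fin (2*n) → ℝ)
    (hrange : ∀ i, φ i ∈ Set.Ioc (-π) π)
    (H : ∀ (x L : ℝ), 0 ≤ L → L < 2*π/3 → ∀ S : Finset (Fin (2*n)),
      (∀ i ∈ S, ∃ k : ℤ, x ≤ φ i + 2*π*k ∧ φ i + 2*π*k ≤ x + L) → S.card ≤ n) :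
    ∃ f : Fin (2*n) → Fin (2*n), (∀ i, f (f i) = i) ∧ (∀ i, f i ≠ i) ∧
      ∀ i, Real.cos (φ i - φ (f i)) ≤ -(1/2) := by
  haveI : NeZero (2*n) := ⟨by omega⟩
  set σ := Tuple.sort φ with hσ
  have mono : Monotone (φ ∘ ⇑σ) := Tuple.monotone_sort φ
  set nn : Fin (2*n) := ⟨n, by omega⟩ with hnn
  have hnn0 : nn + nn = 0 := by
    apply Fin.ext
    rw [Fin.val_add]
    simp only [hnn]
    rw [show n + n = 2*n from by omega, Nat.mod_self]
    rfl
  have hnnne : nn ≠ 0 := by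
    intro h
    have := congrArg Fin.val h
    simp [hnn] at this
    omega
  refine ⟨fun i => σ (σ.symm i + nn), ?_, ?_, ?_⟩
  · intro i
    show σ (σ.symm (σ (σ.symm i + nn)) + nn) = i
    rw [Equiv.symm_apply_apply, add_assoc, hnn0, add_zero, Equiv.apply_symm_apply]
  · intro i h
    have h' : σ (σ.symm i + nn) = i := h
    have h2 : σ (σ.symm i + nn) = σ (σ.symm i) := by rw [Equiv.apply_symm_apply]; exact h'
    have h3 := σ.injective h2
    have h4 : nn = 0 := by
      have := add_left_cancel (a := σ.symm i) (b := nn) (c := 0) (by rw [add_zero]; exact h3)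
      exact this
    exact hnnne h4
  -- key bound for a sorted pair
  have key : ∀ a : Fin (2*n), (a:ℕ) < n →
      Real.cos (φ (σ (a + nn)) - φ (σ a)) ≤ -(1/2) := by
    intro a ha
    have hbval : ((a + nn : Fin (2*n)) : ℕ) = (a:ℕ) + n := by
      rw [Fin.val_add]
      simp only [hnn]
      exact Nat.mod_eq_of_lt (by omega)
    have hle : a ≤ a + nn := by
      rw [Fin.le_def, hbval]; omega
    have hmono := mono hle
    simp only [Function.comp_apply] at hmono
    set Δ := φ (σ (a + nn)) - φ (σ a) with hΔ
    have hΔ0 : 0 ≤ Δ := by rw [hΔ]; linarith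
    have hup : φ (σ (a + nn)) ≤ π := (hrange _).2
    have hlo : -π < φ (σ a) := (hrange _).1
    have hΔlt : Δ < 2*π := by rw [hΔ]; linarith
    -- not too small
    have hge : 2*π/3 ≤ Δ := by
      by_contra hc
      push_neg at hc
      have hcard := H (φ (σ a)) Δ hΔ0 hc ((Finset.Icc a (a + nn)).image σ) ?_
      · rw [Finset.card_image_of_injective _ σ.injective, Fin.card_Icc, hbval] at hcard
        omega
      · intro i hi
        rw [Finset.mem_image] at hi
        obtain ⟨r, hr, rfl⟩ := hi
        rw [Finset.mem_Icc] at hr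
        refine ⟨0, ?_, ?_⟩
        · have := mono hr.1
          simp only [Function.comp_apply] at this
          push_cast
          linarith
        · have := mono hr.2
          simp only [Function.comp_apply] at this
          push_cast
          rw [hΔ]
          linarith
    -- not too large
    have hle4 : Δ ≤ 4*π/3 := by
      by_contra hc
      push_neg at hc
      have hL0 : 0 ≤ 2*π - Δ := by linarith
      have hLlt : 2*π - Δ < 2*π/3 := by linarith
      have hdisj : Disjoint (Finset.Ici (a + nn)) (Finset.Iic a) := by
        rw [Finset.disjoint_left]
        intro r hr1 hr2
        rw [Finset.mem_Ici, Fin.le_def, hbval] at hr1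
        rw [Finset.mem_Iic, Fin.le_def] at hr2
        omega
      have hcard := H (φ (σ (a + nn))) (2*π - Δ) hL0 hLlt
        (((Finset.Ici (a + nn)) ∪ (Finset.Iic a)).image σ) ?_
      · rw [Finset.card_image_of_injective _ σ.injective,
          Finset.card_union_of_disjoint hdisj, Fin.card_Ici, Fin.card_Iic, hbval] at hcard
        omega
      · intro i hi
        rw [Finset.mem_image] at hi
        obtain ⟨r, hr, rfl⟩ := hi
        rw [Finset.mem_union, Finset.mem_Ici, Finset.mem_Iic] at hr
        rcases hr with hr | hr
        · refine ⟨0, ?_, ?_⟩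
          · have := mono hr
            simp only [Function.comp_apply] at this
            push_cast
            linarith
          · have h5 : φ (σ r) ≤ π := (hrange _).2
            push_cast
            rw [hΔ]
            linarith
        · refine ⟨1, ?_, ?_⟩
          · have h5 : -π < φ (σ r) := (hrange _).1
            push_cast
            linarith
          · have := mono hr
            simp only [Function.comp_apply] at this
            push_cast
            rw [hΔ]
            linarith
    -- cosine bound
    have habs : |Δ - π| ≤ π/3 := by
      rw [abs_le]
      constructor <;> linarith
    have h1 : 1/2 ≤ Real.cos (Δ - π) := by
      rw [← Real.cos_abs (Δ - π), ← Real.cos_pi_div_three]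
      exact Real.cos_le_cos_of_nonneg_of_le_pi (abs_nonneg _)
        (by linarith [Real.pi_pos]) habs
    have h2 : Real.cos Δ = - Real.cos (Δ - π) := by
      have := Real.cos_add_pi (Δ - π)
      rw [show Δ - π + π = Δ from by ring] at this
      linarith
    rw [hΔ] at h2 ⊢
    linarith
  -- conclude
  intro i
  show Real.cos (φ i - φ (σ (σ.symm i + nn))) ≤ -(1/2)
  rcases lt_or_ge ((σ.symm i : Fin (2*n)) : ℕ) n with hlt | hge
  · have h := key (σ.symm i) hlt
    rw [Equiv.apply_symm_apply] at h
    rw [← Real.cos_neg, neg_sub]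
    exact h
  · have ha : ((σ.symm i + nn : Fin (2*n)) : ℕ) < n := by
      rw [Fin.val_add]
      simp only [hnn]
      have hv : ((σ.symm i : Fin (2*n)) : ℕ) < 2*n := (σ.symm i).isLt
      have : ((σ.symm i : Fin (2*n)) : ℕ) + n = (((σ.symm i : Fin (2*n)) : ℕ) - n) + 2*n := by
        omega
      rw [this, Nat.add_mod_right, Nat.mod_eq_of_lt (by omega)]
      omega
    have h := key (σ.symm i + nn) ha
    rw [add_assoc, hnn0, add_zero, Equiv.apply_symm_apply] at h
    exact h
end
section
open Real Finset

lemma FM.arccos_ge (t : ℝ) (h : t ≤ -(1/2)) : 2*π/3 ≤ Real.arccos t := by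
  have h2 : Real.arcsin (-(1/2) : ℝ) = -(π/6) := by
    rw [Real.arcsin_neg]
    rw [show (1/2 : ℝ) = Real.sin (π/6) from Real.sin_pi_div_six.symm,
      Real.arcsin_sin (by linarith [Real.pi_pos]) (by linarith [Real.pi_pos])]
  have h1 : Real.arcsin t ≤ -(π/6) := h2 ▸ Real.monotone_arcsin h
  rw [Real.arccos]
  linarith

/-- **Fekete–Meijer / Dumitrescu–Pach–Tóth matching theorem.** For any `2n` distinct
points in the Euclidean plane, there exist a perfect matching (encoded by a
fixed-point-free involution `f`, pairing `p i` with `p (f i)`) and a point `z` in the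
plane such that for every matched pair, either `z` is one of the two points or the
angle `∠ (p i) z (p (f i))` is at least `2π/3`. -/
theorem fekete_meijer_matching
    (n : ℕ) (p : Fin (2 * n) → EuclideanSpace ℝ (Fin 2))
    (hp : Function.Injective p) :
    ∃ (f : Fin (2 * n) → Fin (2 * n)) (z : EuclideanSpace ℝ (Fin 2)),
      (∀ i, f (f i) = i) ∧ (∀ i, f i ≠ i) ∧
      ∀ i, z = p i ∨ z = p (f i) ∨
        2 * Real.pi / 3 ≤ EuclideanGeometry.angle (p i) z (p (f i)) := by
  rcases Nat.eq_zero_or_pos n with hn0 | hn1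
  · subst hn0
    exact ⟨fun i => i, 0, fun i => i.elim0, fun i => i.elim0, fun i => i.elim0⟩
  set X : Fin (2*n) → ℝ := fun i => p i 0 with hX
  set Y : Fin (2*n) → ℝ := fun i => p i 1 with hY
  obtain ⟨z1, z2, t0, hcenter⟩ := FM.exists_center n hn1 X Y
  set Z : EuclideanSpace ℝ (Fin 2) := (WithLp.equiv 2 (Fin 2 → ℝ)).symm ![z1, z2] with hZdef
  have hZc0 : Z 0 = z1 := by simp [hZdef]
  have hZc1 : Z 1 = z2 := by simp [hZdef]
  set w : Fin (2*n) → ℂ := fun i => ⟨X i - z1, Y i - z2⟩ with hw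
  have hpt : ∀ u v : EuclideanSpace ℝ (Fin 2), u 0 = v 0 → u 1 = v 1 → u = v := by
    intro u v h0 h1
    apply PiLp.ext; intro j
    fin_cases j
    exacts [h0, h1]
  have hwzero : ∀ i, w i = 0 → p i = Z := by
    intro i h
    rw [hw, Complex.ext_iff] at h
    simp only [Complex.zero_re, Complex.zero_im] at h
    refine hpt (p i) Z ?_ ?_
    · rw [hZc0]
      have h1 : p i 0 - z1 = 0 := h.1
      linarith
    · rw [hZc1]
      have h1 : p i 1 - z2 = 0 := h.2
      linarith
  have hdot : ∀ (i : Fin (2*n)) (c : ℝ), w i ≠ 0 →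
      (X i - z1) * Real.cos c + (Y i - z2) * Real.sin c
      = ‖w i‖ * Real.cos (Complex.arg (w i) - c) := by
    intro i c h
    have hc := Complex.cos_arg h
    have hs := Complex.sin_arg (w i)
    have ha : ‖w i‖ ≠ 0 := by
      simpa using h
    have hre : (w i).re = X i - z1 := rfl
    have him : (w i).im = Y i - z2 := rfl
    rw [Real.cos_sub, hc, hs, hre, him]
    field_simp
    try ring
  have hgrid : ∀ a b : ℝ, π/3 < b - a → ∃ k : ℤ, a < t0 + k*(π/3) ∧ t0 + k*(π/3) < b := by
    intro a b hab
    have h3 : (0:ℝ) < π/3 := by linarith [Real.pi_pos]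
    set s := (a - t0)/(π/3) with hs
    have e : s * (π/3) = a - t0 := div_mul_cancel₀ _ (ne_of_gt h3)
    refine ⟨⌊s⌋ + 1, ?_, ?_⟩
    · have h1 : s < (⌊s⌋:ℝ) + 1 := Int.lt_floor_add_one s
      have h2 := mul_lt_mul_of_pos_right h1 h3
      rw [e] at h2
      push_cast
      linarith
    · have h1 : (⌊s⌋:ℝ) + 1 ≤ s + 1 := by linarith [Int.floor_le s]
      have h2 := mul_le_mul_of_nonneg_right h1 h3.le
      rw [add_mul, add_mul, e] at h2
      push_cast
      linarith
  have hreal : ∀ (x L : ℝ), 0 ≤ L → L < 2*π/3 → ∀ S : Finset (Fin (2*n)),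
      (∀ i ∈ S, w i ≠ 0 ∧ ∃ k : ℤ,
        x ≤ Complex.arg (w i) + 2*π*k ∧ Complex.arg (w i) + 2*π*k ≤ x + L) → S.card ≤ n := by
    intro x L hL0 hLlt S hS
    obtain ⟨k', hk1, hk2⟩ := hgrid (x + L - π/2) (x + π/2) (by linarith [Real.pi_pos])
    apply hcenter k' S
    intro i hi
    obtain ⟨hwne, k, hk3, hk4⟩ := hS i hi
    rw [hdot i (t0 + k'*(π/3)) hwne]
    apply mul_pos (norm_pos_iff.mpr hwne)
    have hper : Real.cos (Complex.arg (w i) - (t0 + k'*(π/3)))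
        = Real.cos (Complex.arg (w i) - (t0 + k'*(π/3)) + k*(2*π)) :=
      (Real.cos_add_int_mul_two_pi _ k).symm
    rw [hper]
    apply Real.cos_pos_of_mem_Ioo
    constructor
    · have : (k:ℝ)*(2*π) = 2*π*k := by ring
      rw [this]
      linarith
    · have : (k:ℝ)*(2*π) = 2*π*k := by ring
      rw [this]
      linarith
  have hangle : ∀ i j : Fin (2*n), w i ≠ 0 → w j ≠ 0 →
      Real.cos (Complex.arg (w i) - Complex.arg (w j)) ≤ -(1/2) →
      2*π/3 ≤ EuclideanGeometry.angle (p i) Z (p j) := by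
    intro i j hi hj hcos
    have hai : (0:ℝ) < ‖w i‖ := norm_pos_iff.mpr hi
    have haj : (0:ℝ) < ‖w j‖ := norm_pos_iff.mpr hj
    have hci : (p i - Z) 0 = X i - z1 := by
      simp only [PiLp.sub_apply, hZc0]; try rfl
    have hci1 : (p i - Z) 1 = Y i - z2 := by
      simp only [PiLp.sub_apply, hZc1]; try rfl
    have hcj : (p j - Z) 0 = X j - z1 := by
      simp only [PiLp.sub_apply, hZc0]; try rfl
    have hcj1 : (p j - Z) 1 = Y j - z2 := by
      simp only [PiLp.sub_apply, hZc1]; try rfl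
    have hnormi : ‖p i - Z‖ = ‖w i‖ := by
      rw [EuclideanSpace.norm_eq, Fin.sum_univ_two, hci, hci1]
      rw [Complex.norm_def, Complex.normSq_apply]
      simp only [Real.norm_eq_abs, sq_abs]
      congr 1
      show (X i - z1)^2 + (Y i - z2)^2 = (w i).re * (w i).re + (w i).im * (w i).im
      have hre : (w i).re = X i - z1 := rfl
      have him : (w i).im = Y i - z2 := rfl
      rw [hre, him]; ring
    have hnormj : ‖p j - Z‖ = ‖w j‖ := by
      rw [EuclideanSpace.norm_eq, Fin.sum_univ_two, hcj, hcj1]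
      rw [Complex.norm_def, Complex.normSq_apply]
      simp only [Real.norm_eq_abs, sq_abs]
      congr 1
      show (X j - z1)^2 + (Y j - z2)^2 = (w j).re * (w j).re + (w j).im * (w j).im
      have hre : (w j).re = X j - z1 := rfl
      have him : (w j).im = Y j - z2 := rfl
      rw [hre, him]; ring
    have hinner : (inner ℝ (p i - Z) (p j - Z) : ℝ)
        = ‖w i‖ * ‖w j‖
          * Real.cos (Complex.arg (w i) - Complex.arg (w j)) := by
      rw [PiLp.inner_apply, Fin.sum_univ_two]
      simp only [RCLike.inner_apply, starRingEnd_apply, star_trivial]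
      rw [hci, hci1, hcj, hcj1]
      rw [Real.cos_sub, Complex.cos_arg hi, Complex.cos_arg hj,
        Complex.sin_arg (w i), Complex.sin_arg (w j)]
      have hre : (w i).re = X i - z1 := rfl
      have him : (w i).im = Y i - z2 := rfl
      have hre' : (w j).re = X j - z1 := rfl
      have him' : (w j).im = Y j - z2 := rfl
      rw [hre, him, hre', him']
      field_simp
      try ring
    rw [EuclideanGeometry.angle, InnerProductGeometry.angle]
    simp only [vsub_eq_sub]
    rw [hinner, hnormi, hnormj]
    have hq : ‖w i‖ * ‖w j‖
          * Real.cos (Complex.arg (w i) - Complex.arg (w j))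
          / (‖w i‖ * ‖w j‖)
        = Real.cos (Complex.arg (w i) - Complex.arg (w j)) := by
      field_simp
    rw [hq]
    exact FM.arccos_ge _ hcos
  by_cases hex : ∃ j, p j = Z
  · -- degenerate case : the center is one of the points
    obtain ⟨j, hj⟩ := hex
    have hwj' : ∀ i, i ≠ j → w i ≠ 0 := by
      intro i hij h0
      exact hij (hp ((hwzero i h0).trans hj.symm))
    -- choose the fictitious direction ψ for index j
    have hchoice : ∃ ψ : ℝ, ψ ∈ Set.Ioc (-π) π ∧ ∀ x L, 0 ≤ L → L < 2*π/3 →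
        (∃ k : ℤ, x ≤ ψ + 2*π*k ∧ ψ + 2*π*k ≤ x + L) →
        ∀ S : Finset (Fin (2*n)),
          (∀ i ∈ S, i ≠ j ∧ ∃ k : ℤ,
            x ≤ Complex.arg (w i) + 2*π*k ∧ Complex.arg (w i) + 2*π*k ≤ x + L) →
          S.card + 1 ≤ n := by
      by_cases hfull : ∃ x₀ : ℝ, ∃ T : Finset (Fin (2*n)),
          (∀ i ∈ T, i ≠ j ∧ ∃ k : ℤ,
            x₀ ≤ Complex.arg (w i) + 2*π*k ∧ Complex.arg (w i) + 2*π*k ≤ x₀ + 2*π/3)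
          ∧ n ≤ T.card
      · obtain ⟨x₀, T, hT, hTc⟩ := hfull
        obtain ⟨d, hd, hdmem⟩ : ∃ d : ℤ, toIocMod Real.two_pi_pos (-π) (x₀ + 4*π/3)
            = (x₀ + 4*π/3) + 2*π*d ∧
            toIocMod Real.two_pi_pos (-π) (x₀ + 4*π/3) ∈ Set.Ioc (-π) π := by
          refine ⟨ - toIocDiv Real.two_pi_pos (-π) (x₀ + 4*π/3), ?_, ?_⟩
          · rw [toIocMod, zsmul_eq_mul]
            push_cast
            ring
          · have := toIocMod_mem_Ioc Real.two_pi_pos (-π) (x₀ + 4*π/3)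
            rwa [show -π + 2*π = π by ring] at this
        refine ⟨toIocMod Real.two_pi_pos (-π) (x₀ + 4*π/3), hdmem, ?_⟩
        intro x L hL0 hLlt hψk S hS
        obtain ⟨k₂, hk21, hk22⟩ := hψk
        have hdisj : Disjoint S T := by
          rw [Finset.disjoint_left]
          intro i hiS hiT
          obtain ⟨hij, k', hk'1, hk'2⟩ := hS i hiS
          obtain ⟨-, k₁, hk11, hk12⟩ := hT i hiT
          -- derive 0 < M < 1 for an integer M
          rw [hd] at hk21 hk22
          have hπ := Real.pi_pos
          have h2π : (0:ℝ) < 2*π := by linarith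
          have hkey1 : 2*π*(0:ℝ) < 2*π*((k' : ℝ) - k₂ - d - k₁) := by
            ring_nf
            ring_nf at hk21 hk22 hk'1 hk'2 hk11 hk12
            linarith
          have hkey2 : 2*π*((k' : ℝ) - k₂ - d - k₁) < 2*π*1 := by
            ring_nf
            ring_nf at hk21 hk22 hk'1 hk'2 hk11 hk12
            linarith
          have h1 : (0:ℝ) < (k' : ℝ) - k₂ - d - k₁ := (mul_lt_mul_iff_right₀ h2π).mp hkey1
          have h2 : ((k' : ℝ) - k₂ - d - k₁) < 1 := (mul_lt_mul_iff_right₀ h2π).mp hkey2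
          have h3 : (0:ℤ) < k' - k₂ - d - k₁ := by exact_mod_cast h1
          have h4 : (k' - k₂ - d - k₁ : ℤ) < 1 := by exact_mod_cast h2
          omega
        have hsub : S ∪ T ⊆ Finset.univ.erase j := by
          intro i hi
          rw [Finset.mem_union] at hi
          rw [Finset.mem_erase]
          rcases hi with hi | hi
          · exact ⟨(hS i hi).1, Finset.mem_univ i⟩
          · exact ⟨(hT i hi).1, Finset.mem_univ i⟩
        have hcard := Finset.card_le_card hsub
        rw [Finset.card_union_of_disjoint hdisj] at hcard
        have herase : (Finset.univ.erase j).card = 2*n - 1 := by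
          rw [Finset.card_erase_of_mem (Finset.mem_univ j), Finset.card_univ, Fintype.card_fin]
        rw [herase] at hcard
        omega
      · push_neg at hfull
        refine ⟨0, ⟨by linarith [Real.pi_pos], Real.pi_pos.le⟩, ?_⟩
        intro x L hL0 hLlt _ S hS
        have h := hfull x S (fun i hi => ⟨(hS i hi).1, by
          obtain ⟨-, k, hk1, hk2⟩ := hS i hi
          exact ⟨k, hk1, by linarith⟩⟩)
        omega
    obtain ⟨ψ, hψmem, hψprop⟩ := hchoice
    set φ : Fin (2*n) → ℝ := fun i => if i = j then ψ else Complex.arg (w i) with hφ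
    have hrange : ∀ i, φ i ∈ Set.Ioc (-π) π := by
      intro i
      rw [hφ]
      dsimp only
      split
      · exact hψmem
      · exact Complex.arg_mem_Ioc _
    have H : ∀ (x L : ℝ), 0 ≤ L → L < 2*π/3 → ∀ S : Finset (Fin (2*n)),
        (∀ i ∈ S, ∃ k : ℤ, x ≤ φ i + 2*π*k ∧ φ i + 2*π*k ≤ x + L) → S.card ≤ n := by
      intro x L hL0 hLlt S hS
      by_cases hjS : j ∈ S
      · have hj' := hS j hjS
        rw [hφ] at hj'
        simp only [if_pos rfl] at hj'
        have h2 := hψprop x L hL0 hLlt hj' (S.erase j) ?_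
        · have := Finset.card_erase_of_mem hjS
          omega
        · intro i hi
          have hij := (Finset.mem_erase.mp hi).1
          have h3 := hS i (Finset.mem_of_mem_erase hi)
          rw [hφ] at h3
          simp only [if_neg hij] at h3
          exact ⟨hij, h3⟩
      · apply hreal x L hL0 hLlt S
        intro i hi
        have hij : i ≠ j := fun h => hjS (h ▸ hi)
        have h3 := hS i hi
        rw [hφ] at h3
        simp only [if_neg hij] at h3
        exact ⟨hwj' i hij, h3⟩
    obtain ⟨f, hf1, hf2, hf3⟩ := FM.matching n hn1 φ hrange H
    refine ⟨f, Z, hf1, hf2, ?_⟩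
    intro i
    by_cases hij : i = j
    · exact Or.inl (by rw [hij, hj])
    by_cases hfij : f i = j
    · exact Or.inr (Or.inl (by rw [hfij, hj]))
    · refine Or.inr (Or.inr (hangle i (f i) (hwj' i hij) (hwj' (f i) hfij) ?_))
      have h := hf3 i
      rw [hφ] at h
      simp only [if_neg hij, if_neg hfij] at h
      exact h
  · -- generic case : the center is none of the points
    have hwne : ∀ i, w i ≠ 0 := by
      intro i h0
      exact hex ⟨i, hwzero i h0⟩
    obtain ⟨f, hf1, hf2, hf3⟩ := FM.matching n hn1 (fun i => Complex.arg (w i))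
      (fun i => Complex.arg_mem_Ioc _)
      (by
        intro x L h0 hL S hS
        exact hreal x L h0 hL S (fun i hi => ⟨hwne i, hS i hi⟩))
    exact ⟨f, Z, hf1, hf2, fun i =>
      Or.inr (Or.inr (hangle i (f i) (hwne i) (hwne (f i)) (hf3 i)))⟩
end
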